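/- Let (X,d) be a pointed discrete metric space and m ≥ 0. If K ⊂ S^m is a Lipschitz extensor of X and f : A → K, A ⊂ X, is a function whose induced function f' : A → ℝ^{m+1}, f'(x) = |x|·f(x), is Lipschitz, then f extends to a function g : X → K whose induced function g' : X → ℝ^{m+1}, g'(x) = |x|·g(x), is Lipschitz. -/

import Mathlib

/-- A function between metric spaces is *Lipschitz* if it is `λ`-Lipschitz for some `λ ≥ 0`. -/
def LipFun {X Y : Type*} [MetricSpace X] [MetricSpace Y] (f : X → Y) : Prop :=
  ∃ lam : ℝ, 0 ≤ lam ∧ ∀ x y, dist (f x) (f y) ≤ lam * dist x y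

private lemma smul_sub_le {E : Type*} [NormedAddCommGroup E] [NormedSpace ℝ E]
    (p q : E) (hq : ‖q‖ ≤ 1) {s t : ℝ} (hs : 0 ≤ s) :
    ‖s • p - t • q‖ ≤ s * ‖p - q‖ + |s - t| := by
  have h : s • p - t • q = s • (p - q) + (s - t) • q := by
    rw [smul_sub, sub_smul]; abel
  rw [h]
  refine (norm_add_le _ _).trans ?_
  rw [norm_smul, norm_smul, Real.norm_eq_abs, Real.norm_eq_abs, abs_of_nonneg hs]
  have h2 : |s - t| * ‖q‖ ≤ |s - t| * 1 := mul_le_mul_of_nonneg_left hq (abs_nonneg _)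
  linarith

private lemma le_smul_sub {E : Type*} [NormedAddCommGroup E] [NormedSpace ℝ E]
    (p q : E) (hq : ‖q‖ ≤ 1) {s t : ℝ} (hs : 0 ≤ s) :
    s * ‖p - q‖ ≤ ‖s • p - t • q‖ + |s - t| := by
  have h : s • (p - q) = (s • p - t • q) + (t - s) • q := by
    rw [smul_sub, sub_smul]; abel
  have h1 : s * ‖p - q‖ = ‖s • (p - q)‖ := by
    rw [norm_smul, Real.norm_eq_abs, abs_of_nonneg hs]
  rw [h1, h]
  refine (norm_add_le _ _).trans ?_
  rw [norm_smul, Real.norm_eq_abs, abs_sub_comm t s]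
  have h2 : |s - t| * ‖q‖ ≤ |s - t| * 1 := mul_le_mul_of_nonneg_left hq (abs_nonneg _)
  linarith

private lemma key_unscale {E : Type*} [NormedAddCommGroup E] [NormedSpace ℝ E]
    {p q : E} (hp : ‖p‖ ≤ 1) (hq : ‖q‖ ≤ 1) {s t r D d : ℝ} (hr : 0 < r)
    (hrs : r ≤ s) (hrt : r ≤ t) (hD : ‖s • p - t • q‖ ≤ D) (hst : |s - t| ≤ d) :
    ‖p - q‖ * r ≤ D + d := by
  rcases le_total s t with h | h
  · have h1 := le_smul_sub p q hq (s := s) (t := t) (hr.le.trans hrs)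
    nlinarith [norm_nonneg (p - q)]
  · have h1 := le_smul_sub q p hp (s := t) (t := s) (hr.le.trans hrt)
    rw [norm_sub_rev q p, norm_sub_rev (t • q) (s • p), abs_sub_comm t s] at h1
    nlinarith [norm_nonneg (p - q)]

private noncomputable def Rad (ε : ℝ) (k : ℤ) : ℝ := ε * 2 ^ k

private lemma Rad_pos {ε : ℝ} (hε : 0 < ε) (k : ℤ) : 0 < Rad ε k :=
  mul_pos hε (zpow_pos (by norm_num) k)

private lemma Rad_succ (ε : ℝ) (k : ℤ) : Rad ε (k + 1) = 2 * Rad ε k := by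
  unfold Rad
  rw [zpow_add_one₀ (by norm_num : (2:ℝ) ≠ 0)]
  ring

private lemma Rad_mono {ε : ℝ} (hε : 0 < ε) {k l : ℤ} (h : k ≤ l) : Rad ε k ≤ Rad ε l := by
  unfold Rad
  exact mul_le_mul_of_nonneg_left (zpow_le_zpow_right₀ (by norm_num) h) hε.le

private noncomputable def Nix (ε t : ℝ) : ℕ := (Int.log 2 (t / ε)).toNat

private lemma Nix_cast {ε t : ℝ} (hε : 0 < ε) (ht : ε ≤ t) :
    ((Nix ε t : ℕ) : ℤ) = Int.log 2 (t / ε) :=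
  Int.toNat_of_nonneg (by
    rw [Int.log_of_one_le_right _ ((one_le_div hε).2 ht)]
    exact Int.ofNat_nonneg _)

private lemma Nix_low {ε t : ℝ} (hε : 0 < ε) (ht : ε ≤ t) : Rad ε (Nix ε t) ≤ t := by
  have h0 : 0 < t / ε := div_pos (hε.trans_le ht) hε
  have h2 : ((2:ℕ):ℝ) ^ (Int.log 2 (t/ε)) ≤ t / ε := Int.zpow_log_le_self (by norm_num) h0
  unfold Rad
  rw [Nix_cast hε ht]
  have hc : (((2:ℕ):ℝ)) = (2:ℝ) := by norm_num
  rw [hc] at h2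
  calc ε * 2 ^ Int.log 2 (t / ε) ≤ ε * (t / ε) := mul_le_mul_of_nonneg_left h2 hε.le
    _ = t := by field_simp

private lemma Nix_high {ε t : ℝ} (hε : 0 < ε) (ht : ε ≤ t) : t < Rad ε ((Nix ε t : ℤ) + 1) := by
  have h2 : t / ε < ((2:ℕ):ℝ) ^ (Int.log 2 (t/ε) + 1) := Int.lt_zpow_succ_log_self (by norm_num) _
  unfold Rad
  rw [Nix_cast hε ht]
  have hc : (((2:ℕ):ℝ)) = (2:ℝ) := by norm_num
  rw [hc] at h2
  calc t = ε * (t / ε) := by field_simp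
    _ < ε * 2 ^ (Int.log 2 (t / ε) + 1) := by exact mul_lt_mul_of_pos_left h2 hε

set_option maxHeartbeats 1600000 in
/-- if `K ⊂ Sᵐ` is a Lipschitz extensor of a pointed discrete metric space `X`
and `f : A → K` induces a Lipschitz map `f'(x) = |x|·f(x)`, then `f` extends to `g : X → K`
inducing a Lipschitz map `g'`. -/
theorem stmt_3 {X : Type*} [MetricSpace X] (x₀ : X)
    (hdisc : ∃ ε > 0, ∀ x y : X, x ≠ y → ε ≤ dist x y)
    (m : ℕ) (K : Set (EuclideanSpace ℝ (Fin (m + 1))))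
    (hK : K ⊆ Metric.sphere (0 : EuclideanSpace ℝ (Fin (m + 1))) 1)
    (hext : ∃ C > (0 : ℝ), ∀ lam > (0 : ℝ), ∀ (B : Set X) (u : B → K),
        (∀ x y : B, dist (u x) (u y) ≤ lam * dist (x : X) (y : X)) →
        ∃ v : X → K, (∀ b : B, v (b : X) = u b) ∧
          ∀ x y : X, dist (v x) (v y) ≤ C * lam * dist x y)
    (A : Set X) (f : A → K)
    (hf : LipFun (fun a : A => dist (a : X) x₀ • ((f a : EuclideanSpace ℝ (Fin (m + 1)))))) :
    ∃ g : X → K, (∀ a : A, g (a : X) = f a) ∧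
      LipFun (fun x : X => dist x x₀ • ((g x : EuclideanSpace ℝ (Fin (m + 1))))) := by
  classical
  obtain ⟨C, hC, hext⟩ := hext
  obtain ⟨ε, hε, hsep⟩ := hdisc
  obtain ⟨lam, hlam, hlip⟩ := hf
  -- basic facts
  have hKnorm : ∀ k : K, ‖(k : EuclideanSpace ℝ (Fin (m + 1)))‖ = 1 := fun k => by
    have := hK k.2
    rwa [mem_sphere_zero_iff_norm] at this
  have hK2 : ∀ k k' : K, dist k k' =
      ‖(k : EuclideanSpace ℝ (Fin (m + 1))) - (k' : EuclideanSpace ℝ (Fin (m + 1)))‖ :=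
    fun k k' => by rw [Subtype.dist_eq, dist_eq_norm]
  have hKd2 : ∀ k k' : K, dist k k' ≤ 2 := fun k k' => by
    rw [hK2]
    refine (norm_sub_le _ _).trans ?_
    rw [hKnorm, hKnorm]; norm_num
  have hνlip : ∀ x y : X, dist y x₀ - dist x x₀ ≤ dist x y := fun x y => by
    calc dist y x₀ - dist x x₀ ≤ |dist y x₀ - dist x x₀| := le_abs_self _
      _ ≤ dist y x := abs_dist_sub_le y x x₀
      _ = dist x y := dist_comm y x
  have habs : ∀ x y : X, |dist x x₀ - dist y x₀| ≤ dist x y := fun x y => abs_dist_sub_le x y x₀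
  have hflip : ∀ a b : A,
      ‖dist (a : X) x₀ • ((f a : EuclideanSpace ℝ (Fin (m + 1))))
        - dist (b : X) x₀ • ((f b : EuclideanSpace ℝ (Fin (m + 1))))‖
        ≤ lam * dist (a : X) (b : X) := fun a b => by
    have h := hlip a b
    rwa [dist_eq_norm, Subtype.dist_eq] at h
  -- constants
  have hCl : 0 ≤ C * (lam + 1) := mul_nonneg hC.le (by linarith)
  set μ : ℝ := 4 * C * (lam + 1) + 2 * (lam + 1) + 2 with hμdef
  have hμ2 : 2 ≤ μ := by rw [hμdef]; nlinarith [hCl]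
  have hμ0 : 0 ≤ μ := by linarith
  have hμpos : 0 < μ := by linarith
  have hμ4C : 4 * C * (lam + 1) ≤ μ := by rw [hμdef]; nlinarith [hlam]
  have hμ2lam : 2 * (lam + 1) ≤ μ := by rw [hμdef]; nlinarith [hCl]
  have hμC : C * (lam + 1) ≤ μ := by rw [hμdef]; nlinarith [hCl, hlam]
  -- Stage 1: for each n, extend f from A ∩ {|x| ≥ Rad (n-1)}
  have hEx : ∀ n : ℕ, ∃ v : X → K,
      (∀ b : ({x : X | x ∈ A ∧ Rad ε ((n : ℤ) - 1) ≤ dist x x₀} : Set X),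
        v (b : X) = f ⟨b.1, b.2.1⟩) ∧
      (∀ x y : X, dist (v x) (v y) ≤ C * ((lam + 1) / Rad ε ((n : ℤ) - 1)) * dist x y) := by
    intro n
    refine hext _ (div_pos (by linarith) (Rad_pos hε _)) _
      (fun b => f ⟨b.1, b.2.1⟩) ?_
    intro x y
    show dist (f ⟨x.1, x.2.1⟩) (f ⟨y.1, y.2.1⟩)
      ≤ (lam + 1) / Rad ε ((n : ℤ) - 1) * dist (x : X) (y : X)
    rw [hK2, div_mul_eq_mul_div, le_div_iff₀ (Rad_pos hε _)]
    have h := key_unscale (le_of_eq (hKnorm (f ⟨x.1, x.2.1⟩))) (le_of_eq (hKnorm (f ⟨y.1, y.2.1⟩)))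
      (Rad_pos hε ((n : ℤ) - 1)) x.2.2 y.2.2 (hflip ⟨x.1, x.2.1⟩ ⟨y.1, y.2.1⟩)
      (habs (x : X) (y : X))
    linarith
  choose Ef hEf1 hEf2 using hEx
  -- helper agreement facts for Ef
  have hAg : ∀ (k : ℕ) (p : X) (hp : p ∈ A), Rad ε ((k : ℤ) - 1) ≤ dist p x₀ →
      Ef k p = f ⟨p, hp⟩ := by
    intro k p hp h
    exact hEf1 k ⟨p, ⟨hp, h⟩⟩
  -- Stage 2: odd-annulus extensions
  set B' : ℕ → Set X := fun n =>
    {x | (Rad ε ((n : ℤ) - 1) ≤ dist x x₀ ∧ dist x x₀ < Rad ε (n : ℤ)) ∨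
         (Rad ε ((n : ℤ) + 1) ≤ dist x x₀ ∧ dist x x₀ < Rad ε ((n : ℤ) + 2)) ∨
         (x ∈ A ∧ Rad ε ((n : ℤ) - 1) ≤ dist x x₀)} with hB'def
  have hOx : ∀ n : ℕ, ∃ v : X → K, 1 ≤ n →
      ((∀ b : (B' n),
          v (b : X) = if dist (b : X) x₀ < Rad ε ((n : ℤ) + 1) then Ef (n - 1) (b : X)
            else Ef (n + 1) (b : X)) ∧
       (∀ x y : X, dist (v x) (v y) ≤ C * (μ / Rad ε (n : ℤ)) * dist x y)) := by
    intro n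
    rcases Nat.eq_zero_or_pos n with h0 | h1
    · exact ⟨Ef 0, by omega⟩
    · -- useful radius identities
      have e1 : Rad ε (n : ℤ) = 2 * Rad ε ((n : ℤ) - 1) := by
        have h := Rad_succ ε ((n : ℤ) - 1); rw [sub_add_cancel] at h; exact h
      have e2 : Rad ε ((n : ℤ) - 1) = 2 * Rad ε ((n : ℤ) - 2) := by
        have h := Rad_succ ε ((n : ℤ) - 2)
        rw [show (n : ℤ) - 2 + 1 = (n : ℤ) - 1 by ring] at h; exact h
      have hcast1 : ((n - 1 : ℕ) : ℤ) - 1 = (n : ℤ) - 2 := by omega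
      have hcast2 : ((n + 1 : ℕ) : ℤ) - 1 = (n : ℤ) := by omega
      -- Lipschitz constants of the two Ef's in play
      have hc1 : C * ((lam + 1) / Rad ε (((n - 1 : ℕ) : ℤ) - 1)) ≤ μ / Rad ε (n : ℤ) := by
        rw [hcast1, ← mul_div_assoc, div_le_div_iff₀ (Rad_pos hε _) (Rad_pos hε _), e1, e2]
        nlinarith [mul_nonneg (sub_nonneg.2 hμ4C) (Rad_pos hε ((n : ℤ) - 2)).le]
      have hc2 : C * ((lam + 1) / Rad ε (((n + 1 : ℕ) : ℤ) - 1)) ≤ μ / Rad ε (n : ℤ) := by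
        rw [hcast2, ← mul_div_assoc, div_le_div_iff₀ (Rad_pos hε _) (Rad_pos hε _)]
        nlinarith [mul_nonneg (sub_nonneg.2 hμC) (Rad_pos hε (n : ℤ)).le]
      have hLip1 : ∀ p q : X, dist (Ef (n - 1) p) (Ef (n - 1) q) ≤ (μ / Rad ε (n : ℤ)) * dist p q :=
        fun p q => (hEf2 (n - 1) p q).trans (mul_le_mul_of_nonneg_right hc1 dist_nonneg)
      have hLip2 : ∀ p q : X, dist (Ef (n + 1) p) (Ef (n + 1) q) ≤ (μ / Rad ε (n : ℤ)) * dist p q :=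
        fun p q => (hEf2 (n + 1) p q).trans (mul_le_mul_of_nonneg_right hc2 dist_nonneg)
      -- mixed-branch bound
      have hmix : ∀ x y : B' n, dist (x : X) x₀ < Rad ε ((n : ℤ) + 1) →
          ¬ (dist (y : X) x₀ < Rad ε ((n : ℤ) + 1)) →
          dist (Ef (n - 1) (x : X)) (Ef (n + 1) (y : X)) ≤ (μ / Rad ε (n : ℤ)) * dist (x : X) (y : X) := by
        intro x y hx hy
        push_neg at hy
        by_cases hxn : dist (x : X) x₀ < Rad ε (n : ℤ)
        · -- far apart
          have hd : Rad ε (n : ℤ) ≤ dist (x : X) (y : X) := by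
            have h1 := hνlip (x : X) (y : X)
            have h2 := Rad_succ ε (n : ℤ)
            linarith
          calc dist (Ef (n - 1) (x : X)) (Ef (n + 1) (y : X)) ≤ 2 := hKd2 _ _
            _ ≤ (μ / Rad ε (n : ℤ)) * Rad ε (n : ℤ) := by
                rw [div_mul_cancel₀ _ (Rad_pos hε (n : ℤ)).ne']; exact hμ2
            _ ≤ (μ / Rad ε (n : ℤ)) * dist (x : X) (y : X) :=
                mul_le_mul_of_nonneg_left hd (div_nonneg hμ0 (Rad_pos hε _).le)
        · push_neg at hxn
          have hxA : (x : X) ∈ A ∧ Rad ε ((n : ℤ) - 1) ≤ dist (x : X) x₀ := by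
            have hx2 : (Rad ε ((n : ℤ) - 1) ≤ dist (x : X) x₀ ∧ dist (x : X) x₀ < Rad ε (n : ℤ)) ∨
                (Rad ε ((n : ℤ) + 1) ≤ dist (x : X) x₀ ∧ dist (x : X) x₀ < Rad ε ((n : ℤ) + 2)) ∨
                ((x : X) ∈ A ∧ Rad ε ((n : ℤ) - 1) ≤ dist (x : X) x₀) := x.2
            rcases hx2 with h | h | h
            · exact absurd h.2 (not_lt.2 hxn)
            · exact absurd hx (not_lt.2 h.1)
            · exact h
          have ea : Ef (n - 1) (x : X) = f ⟨(x : X), hxA.1⟩ := by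
            refine hAg (n - 1) (x : X) hxA.1 ?_
            rw [hcast1]
            exact le_trans (Rad_mono hε (by omega)) hxA.2
          have eb : Ef (n + 1) (x : X) = f ⟨(x : X), hxA.1⟩ := by
            refine hAg (n + 1) (x : X) hxA.1 ?_
            rw [hcast2]
            exact hxn
          rw [ea, ← eb]
          exact hLip2 _ _
      have hu : ∀ x y : B' n,
          dist ((fun b : B' n => if dist (b : X) x₀ < Rad ε ((n : ℤ) + 1) then Ef (n - 1) (b : X)
              else Ef (n + 1) (b : X)) x)
            ((fun b : B' n => if dist (b : X) x₀ < Rad ε ((n : ℤ) + 1) then Ef (n - 1) (b : X)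
              else Ef (n + 1) (b : X)) y)
            ≤ (μ / Rad ε (n : ℤ)) * dist (x : X) (y : X) := by
        intro x y
        by_cases hx : dist (x : X) x₀ < Rad ε ((n : ℤ) + 1) <;>
          by_cases hy : dist (y : X) x₀ < Rad ε ((n : ℤ) + 1)
        · simp only [if_pos hx, if_pos hy]; exact hLip1 _ _
        · simp only [if_pos hx, if_neg hy]; exact hmix x y hx hy
        · simp only [if_neg hx, if_pos hy]
          rw [dist_comm (Ef (n + 1) (x : X)) (Ef (n - 1) (y : X)), dist_comm (x : X) (y : X)]
          exact hmix y x hy hx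
        · simp only [if_neg hx, if_neg hy]; exact hLip2 _ _
      obtain ⟨v, hv1, hv2⟩ := hext (μ / Rad ε (n : ℤ)) (div_pos hμpos (Rad_pos hε _)) (B' n)
        (fun b : B' n => if dist (b : X) x₀ < Rad ε ((n : ℤ) + 1) then Ef (n - 1) (b : X)
          else Ef (n + 1) (b : X)) hu
      exact ⟨v, fun _ => ⟨hv1, hv2⟩⟩
  choose Od hOd using hOx
  -- the glued map
  set g : X → K := fun x =>
    if Odd (Nix ε (dist x x₀)) then Od (Nix ε (dist x x₀)) x else Ef (Nix ε (dist x x₀)) x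
    with hgdef
  have hgval : ∀ x : X, g x =
      if Odd (Nix ε (dist x x₀)) then Od (Nix ε (dist x x₀)) x else Ef (Nix ε (dist x x₀)) x :=
    fun x => congrFun hgdef x
  -- agreement of g with f away from the base point
  have hgf : ∀ a : A, (a : X) ≠ x₀ → g (a : X) = f a := by
    intro a ha
    have hεa : ε ≤ dist (a : X) x₀ := hsep _ _ ha
    have hlow := Nix_low hε hεa
    have hhigh := Nix_high hε hεa
    have hga := hgval (a : X)
    set n := Nix ε (dist (a : X) x₀) with hn
    have hfa : ∀ (h : (a : X) ∈ A), f ⟨(a : X), h⟩ = f a := fun h => by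
      congr 1
    rcases Nat.even_or_odd n with he | ho
    · rw [if_neg (Nat.not_odd_iff_even.2 he)] at hga
      rw [hga]
      rw [hAg n (a : X) a.2 (le_trans (Rad_mono hε (by omega)) hlow)]
    · have hn1 : 1 ≤ n := ho.pos
      rw [if_pos ho] at hga
      obtain ⟨hOag, hOlip⟩ := hOd n hn1
      have hmem : (a : X) ∈ B' n := by
        rw [hB'def]
        exact Or.inr (Or.inr ⟨a.2, le_trans (Rad_mono hε (by omega)) hlow⟩)
      have h2 : Od n (a : X) = if dist (a : X) x₀ < Rad ε ((n : ℤ) + 1) then Ef (n - 1) (a : X)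
          else Ef (n + 1) (a : X) := hOag ⟨(a : X), hmem⟩
      rw [if_pos hhigh] at h2
      rw [hga, h2]
      have : Ef (n - 1) (a : X) = f ⟨(a : X), a.2⟩ := by
        refine hAg (n - 1) (a : X) a.2 ?_
        rw [show ((n - 1 : ℕ) : ℤ) - 1 = (n : ℤ) - 2 by omega]
        exact le_trans (Rad_mono hε (by omega)) hlow
      rw [this]
  -- main two-point estimate
  have hmain : ∀ x y : X, x ≠ x₀ → y ≠ x₀ → dist x x₀ ≤ dist y x₀ →
      ‖dist x x₀ • ((g x : EuclideanSpace ℝ (Fin (m + 1))))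
        - dist y x₀ • ((g y : EuclideanSpace ℝ (Fin (m + 1))))‖
        ≤ (2 * C * μ + 9) * dist x y := by
    intro x y hx hy hxy
    have hεx := hsep x x₀ hx
    have hεy := hsep y x₀ hy
    have hlx := Nix_low hε hεx
    have hhx := Nix_high hε hεx
    have hly := Nix_low hε hεy
    have hhy := Nix_high hε hεy
    have hgx := hgval x
    have hgy := hgval y
    set n := Nix ε (dist x x₀) with hn
    set mm := Nix ε (dist y x₀) with hmm'
    have hnm : n ≤ mm := by
      by_contra hcon
      push_neg at hcon
      have h := Rad_mono hε (show ((mm : ℤ) + 1) ≤ (n : ℤ) by omega)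
      linarith
    rcases lt_or_ge ((n : ℤ) + 1) (mm : ℤ) with hfar | hnear
    · -- far case
      have h1 : Rad ε ((n : ℤ) + 1) ≤ Rad ε ((mm : ℤ) - 1) := Rad_mono hε (by omega)
      have h2 : Rad ε (mm : ℤ) = 2 * Rad ε ((mm : ℤ) - 1) := by
        have h := Rad_succ ε ((mm : ℤ) - 1); rwa [sub_add_cancel] at h
      have hda := hνlip x y
      have hb : ‖dist x x₀ • ((g x : EuclideanSpace ℝ (Fin (m + 1))))
          - dist y x₀ • ((g y : EuclideanSpace ℝ (Fin (m + 1))))‖ ≤ dist x x₀ + dist y x₀ := by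
        refine (norm_sub_le _ _).trans ?_
        rw [norm_smul, norm_smul, Real.norm_eq_abs, Real.norm_eq_abs,
          abs_of_nonneg dist_nonneg, abs_of_nonneg dist_nonneg, hKnorm, hKnorm,
          mul_one, mul_one]
      nlinarith [mul_nonneg (mul_nonneg hC.le hμ0) (dist_nonneg (x := x) (y := y)),
        dist_nonneg (x := x) (y := y)]
    · -- near case : mm = n or mm = n + 1
      have hm : mm = n ∨ mm = n + 1 := by omega
      obtain ⟨w, hwx, hwy, hwlip⟩ :
          ∃ w : X → K, w x = g x ∧ w y = g y ∧
            ∀ p q : X, dist (w p) (w q) ≤ C * (μ / Rad ε (n : ℤ)) * dist p q := by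
        have e1 : Rad ε (n : ℤ) = 2 * Rad ε ((n : ℤ) - 1) := by
          have h := Rad_succ ε ((n : ℤ) - 1); rw [sub_add_cancel] at h; exact h
        have hcEf : ∀ p q : X, dist (Ef n p) (Ef n q) ≤ C * (μ / Rad ε (n : ℤ)) * dist p q := by
          intro p q
          refine (hEf2 n p q).trans (mul_le_mul_of_nonneg_right ?_ dist_nonneg)
          refine mul_le_mul_of_nonneg_left ?_ hC.le
          rw [div_le_div_iff₀ (Rad_pos hε _) (Rad_pos hε _), e1]
          nlinarith [mul_nonneg (sub_nonneg.2 hμ2lam) (Rad_pos hε ((n : ℤ) - 1)).le]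
        rcases hm with hm | hm
        · -- same annulus
          rcases Nat.even_or_odd n with he | ho
          · refine ⟨Ef n, ?_, ?_, hcEf⟩
            · rw [hgx, if_neg (Nat.not_odd_iff_even.2 he)]
            · rw [hgy, hm, if_neg (Nat.not_odd_iff_even.2 he)]
          · have hn1 : 1 ≤ n := ho.pos
            obtain ⟨hOag, hOlip⟩ := hOd n hn1
            refine ⟨Od n, ?_, ?_, hOlip⟩
            · rw [hgx, if_pos ho]
            · rw [hgy, hm, if_pos ho]
        · -- adjacent annuli
          rcases Nat.even_or_odd n with he | ho
          · -- n even, mm = n+1 odd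
            have hmodd : Odd mm := by rw [hm]; exact Even.add_one he
            have hm1 : 1 ≤ mm := hmodd.pos
            obtain ⟨hOag, hOlip⟩ := hOd mm hm1
            have hmemx : x ∈ B' mm := by
              rw [hB'def]
              refine Or.inl ⟨?_, ?_⟩
              · rw [show ((mm : ℤ) - 1) = (n : ℤ) by omega]; exact hlx
              · rw [show ((mm : ℤ)) = (n : ℤ) + 1 by omega]; exact hhx
            have h2 : Od mm x = if dist x x₀ < Rad ε ((mm : ℤ) + 1) then Ef (mm - 1) x
                else Ef (mm + 1) x := hOag ⟨x, hmemx⟩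
            rw [if_pos (lt_of_lt_of_le hhx (Rad_mono hε (by omega)))] at h2
            rw [show mm - 1 = n by omega] at h2
            refine ⟨Od mm, ?_, ?_, ?_⟩
            · rw [hgx, if_neg (Nat.not_odd_iff_even.2 he), h2]
            · rw [hgy, if_pos hmodd]
            · intro p q
              refine (hOlip p q).trans (mul_le_mul_of_nonneg_right ?_ dist_nonneg)
              refine mul_le_mul_of_nonneg_left ?_ hC.le
              rw [div_le_div_iff₀ (Rad_pos hε _) (Rad_pos hε _)]
              exact mul_le_mul_of_nonneg_left (Rad_mono hε (by omega)) hμ0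
          · -- n odd, mm = n+1 even
            have hn1 : 1 ≤ n := ho.pos
            obtain ⟨hOag, hOlip⟩ := hOd n hn1
            have hmemy : y ∈ B' n := by
              rw [hB'def]
              refine Or.inr (Or.inl ⟨?_, ?_⟩)
              · rw [show ((n : ℤ) + 1) = (mm : ℤ) by omega]; exact hly
              · rw [show ((n : ℤ) + 2) = (mm : ℤ) + 1 by omega]; exact hhy
            have h2 : Od n y = if dist y x₀ < Rad ε ((n : ℤ) + 1) then Ef (n - 1) y
                else Ef (n + 1) y := hOag ⟨y, hmemy⟩
            have hyge : ¬ (dist y x₀ < Rad ε ((n : ℤ) + 1)) := by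
              push_neg
              refine le_trans (le_of_eq ?_) hly
              congr 1
              omega
            rw [if_neg hyge] at h2
            rw [show n + 1 = mm by omega] at h2
            have hmeven : ¬ Odd mm := by
              rw [hm]
              exact Nat.not_odd_iff_even.2 (Odd.add_one ho)
            refine ⟨Od n, ?_, ?_, hOlip⟩
            · rw [hgx, if_pos ho]
            · rw [hgy, if_neg hmeven, h2]
      -- finish the near case
      have hgxy : ‖((g x : EuclideanSpace ℝ (Fin (m + 1)))) - ((g y : EuclideanSpace ℝ (Fin (m + 1))))‖
          ≤ C * (μ / Rad ε (n : ℤ)) * dist x y := by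
        have h := hwlip x y
        rwa [hK2, hwx, hwy] at h
      have hstep := smul_sub_le ((g x : EuclideanSpace ℝ (Fin (m + 1))))
        ((g y : EuclideanSpace ℝ (Fin (m + 1)))) (le_of_eq (hKnorm (g y)))
        (s := dist x x₀) (t := dist y x₀) dist_nonneg
      have habs' := habs x y
      have hkey : dist x x₀ * (C * (μ / Rad ε (n : ℤ)) * dist x y)
          ≤ 2 * C * μ * dist x y := by
        have h2 : dist x x₀ ≤ 2 * Rad ε (n : ℤ) := by
          have h := Rad_succ ε (n : ℤ); linarith
        have hp := Rad_pos hε (n : ℤ)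
        have expand : dist x x₀ * (C * (μ / Rad ε (n : ℤ)) * dist x y)
            = (dist x x₀ * C * μ * dist x y) / Rad ε (n : ℤ) := by ring
        rw [expand, div_le_iff₀ hp]
        nlinarith [mul_nonneg (mul_nonneg (mul_nonneg hC.le hμ0)
          (dist_nonneg (x := x) (y := y))) (sub_nonneg.2 h2)]
      have hmul := mul_le_mul_of_nonneg_left hgxy (dist_nonneg (x := x) (y := x₀))
      calc ‖dist x x₀ • ((g x : EuclideanSpace ℝ (Fin (m + 1))))
          - dist y x₀ • ((g y : EuclideanSpace ℝ (Fin (m + 1))))‖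
          ≤ dist x x₀ * ‖((g x : EuclideanSpace ℝ (Fin (m + 1))))
            - ((g y : EuclideanSpace ℝ (Fin (m + 1))))‖ + |dist x x₀ - dist y x₀| := hstep
        _ ≤ dist x x₀ * (C * (μ / Rad ε (n : ℤ)) * dist x y) + dist x y := add_le_add hmul habs'
        _ ≤ 2 * C * μ * dist x y + dist x y := add_le_add_left hkey _
        _ ≤ (2 * C * μ + 9) * dist x y := by nlinarith [dist_nonneg (x := x) (y := y)]
  -- final answer
  set G : X → K := fun x => if h : x ∈ A ∧ x = x₀ then f ⟨x, h.1⟩ else g x with hGdef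
  have hGval : ∀ x : X, G x = if h : x ∈ A ∧ x = x₀ then f ⟨x, h.1⟩ else g x :=
    fun x => congrFun hGdef x
  refine ⟨G, ?_, ?_⟩
  · intro a
    by_cases ha : (a : X) = x₀
    · rw [hGval, dif_pos ⟨a.2, ha⟩]
    · rw [hGval, dif_neg (by rintro ⟨-, h⟩; exact ha h)]
      exact hgf a ha
  · refine ⟨2 * C * μ + 9, by nlinarith [mul_nonneg hC.le hμ0], fun x y => ?_⟩
    simp only []
    rw [dist_eq_norm]
    by_cases hx : x = x₀ <;> by_cases hy : y = x₀
    · rw [hx, hy]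
      simp
    · rw [hx]
      simp only [dist_self, zero_smul, zero_sub, norm_neg]
      rw [norm_smul, Real.norm_eq_abs, abs_of_nonneg dist_nonneg, hKnorm, mul_one,
        dist_comm x₀ y]
      nlinarith [mul_nonneg (mul_nonneg hC.le hμ0) (dist_nonneg (x := y) (y := x₀)),
        dist_nonneg (x := y) (y := x₀)]
    · rw [hy]
      simp only [dist_self, zero_smul, sub_zero]
      rw [norm_smul, Real.norm_eq_abs, abs_of_nonneg dist_nonneg, hKnorm, mul_one]
      nlinarith [mul_nonneg (mul_nonneg hC.le hμ0) (dist_nonneg (x := x) (y := x₀)),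
        dist_nonneg (x := x) (y := x₀)]
    · have hGx : G x = g x := by rw [hGval, dif_neg (by rintro ⟨-, h⟩; exact hx h)]
      have hGy : G y = g y := by rw [hGval, dif_neg (by rintro ⟨-, h⟩; exact hy h)]
      rw [hGx, hGy]
      rcases le_total (dist x x₀) (dist y x₀) with h | h
      · exact hmain x y hx hy h
      · have h2 := hmain y x hy hx h
        rw [dist_comm y x] at h2
        calc ‖dist x x₀ • ((g x : EuclideanSpace ℝ (Fin (m + 1))))
            - dist y x₀ • ((g y : EuclideanSpace ℝ (Fin (m + 1))))‖
            = ‖dist y x₀ • ((g y : EuclideanSpace ℝ (Fin (m + 1))))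
            - dist x x₀ • ((g x : EuclideanSpace ℝ (Fin (m + 1))))‖ := norm_sub_rev _ _
          _ ≤ _ := h2
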